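/- Let M ∈ GSp₄(ℚ_p) ∩ M₄(ℤ_p) with v_p(μ(M)) = 2, where μ is the similitude multiplier. Then M lies in the double coset GSp₄(ℤ_p)·diag(1,p,p²,p)·GSp₄(ℤ_p) if and only if the reduction of M modulo p has rank 1 over 𝔽_p. -/

import Mathlib

/-! STATEMENT 16: for `M ∈ GSp₄(ℚ_p) ∩ M₄(ℤ_p)` with `v_p(μ(M)) = 2`,
`M ∈ GSp₄(ℤ_p)·diag(1,p,p²,p)·GSp₄(ℤ_p)` iff the reduction of `M` mod `p` has
rank `1` over `𝔽_p`. -/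

open Matrix

/-- Coordinates of `ℚ_p⁴`, the `i`-th coordinate pairing with the `(2+i)`-th. -/
abbrev Idx := Fin 2 ⊕ Fin 2

/-- The standard symplectic form on `ℚ_p⁴`. -/
noncomputable def Jmat (p : ℕ) [Fact p.Prime] : Matrix Idx Idx ℚ_[p] :=
  Matrix.fromBlocks 0 1 (-1) 0

/-- `GSp₄(ℚ_p)`: symplectic similitude matrices. -/
def GSpQ (p : ℕ) [Fact p.Prime] : Set (Matrix Idx Idx ℚ_[p]) :=
  {A | ∃ μ : ℚ_[p], μ ≠ 0 ∧ Aᵀ * Jmat p * A = μ • Jmat p}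

/-- `GSp₄(ℤ_p) = GSp₄(ℚ_p) ∩ GL₄(ℤ_p)`. -/
def GSpZ (p : ℕ) [Fact p.Prime] : Set (Matrix Idx Idx ℚ_[p]) :=
  {A | A ∈ GSpQ p ∧ (∀ i j, ‖A i j‖ ≤ 1) ∧ ‖A.det‖ = 1}

/-- `B = diag(1,p,p²,p)`. -/
noncomputable def Bmat (p : ℕ) [Fact p.Prime] : Matrix Idx Idx ℚ_[p] :=
  Matrix.diagonal (Sum.elim ![1, (p : ℚ_[p])] ![(p : ℚ_[p]) ^ 2, (p : ℚ_[p])])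

namespace DC
variable {p : ℕ} [Fact p.Prime]

/-- integrality of a `ℚ_p`-matrix -/
def IsInt (M : Matrix Idx Idx ℚ_[p]) : Prop := ∀ i j, ‖M i j‖ ≤ 1

/-- the coercion `ℤ_p → ℚ_p` as ring hom -/
noncomputable abbrev cR (p : ℕ) [Fact p.Prime] : ℤ_[p] →+* ℚ_[p] := PadicInt.Coe.ringHom

lemma cR_apply (x : ℤ_[p]) : cR p x = (x : ℚ_[p]) := rfl

/-- entrywise lift to `ℤ_p` -/
def ilift (M : Matrix Idx Idx ℚ_[p]) (h : IsInt M) : Matrix Idx Idx ℤ_[p] :=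
  Matrix.of fun i j => (⟨M i j, h i j⟩ : ℤ_[p])

lemma ilift_map (M : Matrix Idx Idx ℚ_[p]) (h : IsInt M) :
    (ilift M h).map (cR p) = M := by
  ext i j; rfl

lemma isInt_of_map (N : Matrix Idx Idx ℤ_[p]) : IsInt (N.map (cR p)) := by
  intro i j
  simpa [Matrix.map_apply, cR_apply, ← PadicInt.norm_def] using PadicInt.norm_le_one (N i j)

lemma map_inj : Function.Injective
    (fun N : Matrix Idx Idx ℤ_[p] => N.map (cR p)) := by
  intro A B h
  ext i j
  exact Subtype.coe_injective (congrFun (congrFun h i) j)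

lemma IsInt.mul {A B : Matrix Idx Idx ℚ_[p]} (hA : IsInt A) (hB : IsInt B) :
    IsInt (A * B) := by
  have : (ilift A hA * ilift B hB).map (cR p) = A * B := by
    rw [Matrix.map_mul, ilift_map, ilift_map]
  rw [← this]; exact isInt_of_map _

lemma ilift_mul {A B : Matrix Idx Idx ℚ_[p]} (hA : IsInt A) (hB : IsInt B) :
    ilift (A * B) (hA.mul hB) = ilift A hA * ilift B hB := by
  apply map_inj
  simp only [ilift_map, Matrix.map_mul]

lemma IsInt.det_norm_le {A : Matrix Idx Idx ℚ_[p]} (hA : IsInt A) : ‖A.det‖ ≤ 1 := by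
  have : (cR p) (ilift A hA).det = A.det := by
    rw [RingHom.map_det, RingHom.mapMatrix_apply, ilift_map]
  rw [← this, cR_apply, ← PadicInt.norm_def]
  exact PadicInt.norm_le_one _

lemma IsInt.adjugate {A : Matrix Idx Idx ℚ_[p]} (hA : IsInt A) : IsInt A.adjugate := by
  have : ((ilift A hA).adjugate).map (cR p) = A.adjugate := by
    rw [← RingHom.mapMatrix_apply, RingHom.map_adjugate, RingHom.mapMatrix_apply, ilift_map]
  rw [← this]; exact isInt_of_map _



lemma J_transpose : (Jmat p)ᵀ = -(Jmat p) := by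
  simp [Jmat, Matrix.fromBlocks_transpose, Matrix.fromBlocks_neg]

lemma J_mul_J : Jmat p * Jmat p = -1 := by
  have h1 : (-1 : Matrix Idx Idx ℚ_[p]) = Matrix.fromBlocks (-1) 0 0 (-1) := by
    rw [show (1 : Matrix Idx Idx ℚ_[p]) = Matrix.fromBlocks 1 0 0 1 from (Matrix.fromBlocks_one).symm, Matrix.fromBlocks_neg]
    simp
  rw [h1]
  simp [Jmat, Matrix.fromBlocks_multiply]

lemma card_Idx : Fintype.card Idx = 4 := by simp

lemma J_det_sq : (Jmat p).det * (Jmat p).det = 1 := by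
  have := congrArg Matrix.det (J_mul_J (p := p))
  rw [Matrix.det_mul, Matrix.det_neg, Matrix.det_one, card_Idx] at this
  rw [this]; norm_num

lemma J_det_ne : (Jmat p).det ≠ 0 := by
  intro h
  have := J_det_sq (p := p)
  rw [h, mul_zero] at this
  exact zero_ne_one this

lemma det_sq_of_sim {A : Matrix Idx Idx ℚ_[p]} {ν : ℚ_[p]}
    (h : Aᵀ * Jmat p * A = ν • Jmat p) : A.det ^ 2 = ν ^ 4 := by
  have h0 := congrArg Matrix.det h
  rw [Matrix.det_mul, Matrix.det_mul, Matrix.det_transpose, Matrix.det_smul, card_Idx] at h0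
  have h2 : (A.det ^ 2) * (Jmat p).det = ν ^ 4 * (Jmat p).det := by linear_combination h0
  exact mul_right_cancel₀ J_det_ne h2

lemma norm_det_of_sim {A : Matrix Idx Idx ℚ_[p]} {ν : ℚ_[p]}
    (h : Aᵀ * Jmat p * A = ν • Jmat p) : ‖A.det‖ = ‖ν‖ ^ 2 := by
  have h1 : ‖A.det‖ ^ 2 = (‖ν‖ ^ 2) ^ 2 := by
    rw [← norm_pow, det_sq_of_sim h, norm_pow]; ring
  have := abs_eq_abs.mpr (Or.inl h1)
  nlinarith [norm_nonneg A.det, norm_nonneg ν, sq_nonneg (‖A.det‖ - ‖ν‖^2), sq_nonneg (‖A.det‖ + ‖ν‖^2)]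


lemma mem_GSpZ_of {A : Matrix Idx Idx ℚ_[p]} {ν : ℚ_[p]} (hInt : IsInt A)
    (hν : ν ≠ 0) (h : Aᵀ * Jmat p * A = ν • Jmat p) (hnorm : ‖ν‖ = 1) :
    A ∈ GSpZ p := by
  refine ⟨⟨ν, hν, h⟩, hInt, ?_⟩
  rw [norm_det_of_sim h, hnorm]; norm_num

lemma GSpZ_int {A : Matrix Idx Idx ℚ_[p]} (h : A ∈ GSpZ p) : IsInt A := h.2.1

lemma GSpZ_det_unit {A : Matrix Idx Idx ℚ_[p]} (h : A ∈ GSpZ p) : IsUnit A.det := by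
  refine isUnit_iff_ne_zero.mpr (fun h0 => ?_)
  have h2 := h.2.2
  rw [h0, norm_zero] at h2
  exact zero_ne_one h2

lemma GSpZ_mul {A B : Matrix Idx Idx ℚ_[p]} (hA : A ∈ GSpZ p) (hB : B ∈ GSpZ p) :
    A * B ∈ GSpZ p := by
  obtain ⟨⟨ν, hν0, hν⟩, hAi, hAd⟩ := hA
  obtain ⟨⟨τ, hτ0, hτ⟩, hBi, hBd⟩ := hB
  refine ⟨⟨ν * τ, mul_ne_zero hν0 hτ0, ?_⟩, IsInt.mul hAi hBi, ?_⟩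
  · rw [Matrix.transpose_mul]
    calc Bᵀ * Aᵀ * Jmat p * (A * B) = Bᵀ * (Aᵀ * Jmat p * A) * B := by
          simp only [Matrix.mul_assoc]
      _ = Bᵀ * (ν • Jmat p) * B := by rw [hν]
      _ = ν • (Bᵀ * Jmat p * B) := by
          rw [Matrix.mul_smul, Matrix.smul_mul]
      _ = ν • (τ • Jmat p) := by rw [hτ]
      _ = (ν * τ) • Jmat p := by rw [smul_smul]
  · rw [Matrix.det_mul, norm_mul, hAd, hBd, mul_one]

lemma IsInt.inv {A : Matrix Idx Idx ℚ_[p]} (hInt : IsInt A) (hdet : ‖A.det‖ = 1) :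
    IsInt A⁻¹ := by
  intro i j
  rw [Matrix.inv_def]
  have : ‖Ring.inverse A.det‖ = 1 := by
    rw [Ring.inverse_eq_inv, norm_inv, hdet]; norm_num
  calc ‖(Ring.inverse A.det • A.adjugate) i j‖ = ‖Ring.inverse A.det‖ * ‖A.adjugate i j‖ := by
        simp [Matrix.smul_apply, norm_mul]
    _ ≤ 1 := by rw [this, one_mul]; exact hInt.adjugate i j

lemma GSpZ_inv {A : Matrix Idx Idx ℚ_[p]} (hA : A ∈ GSpZ p) : A⁻¹ ∈ GSpZ p := by
  obtain ⟨⟨ν, hν0, hν⟩, hAi, hAd⟩ := hA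
  have hdu : IsUnit A.det := isUnit_iff_ne_zero.mpr
    (by intro h0; rw [h0, norm_zero] at hAd; exact zero_ne_one hAd)
  have hmul : A * A⁻¹ = 1 := Matrix.mul_nonsing_inv A hdu
  have hmul' : A⁻¹ * A = 1 := Matrix.nonsing_inv_mul A hdu
  have htr : (A⁻¹)ᵀ * Aᵀ = 1 := by rw [← Matrix.transpose_mul, hmul, Matrix.transpose_one]
  refine ⟨⟨ν⁻¹, inv_ne_zero hν0, ?_⟩, IsInt.inv hAi hAd, ?_⟩
  · have h1 : (A⁻¹)ᵀ * (Aᵀ * Jmat p * A) * A⁻¹ = (A⁻¹)ᵀ * (ν • Jmat p) * A⁻¹ := by rw [hν]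
    have h2 : (A⁻¹)ᵀ * (Aᵀ * Jmat p * A) * A⁻¹ = Jmat p := by
      calc (A⁻¹)ᵀ * (Aᵀ * Jmat p * A) * A⁻¹
          = ((A⁻¹)ᵀ * Aᵀ) * Jmat p * (A * A⁻¹) := by simp only [Matrix.mul_assoc]
        _ = Jmat p := by rw [htr, hmul]; simp
    rw [h2] at h1
    have h3 : (A⁻¹)ᵀ * (ν • Jmat p) * A⁻¹ = ν • ((A⁻¹)ᵀ * Jmat p * A⁻¹) := by
      rw [Matrix.mul_smul, Matrix.smul_mul]
    rw [h3] at h1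
    conv_rhs => rw [h1]
    rw [smul_smul, inv_mul_cancel₀ hν0, one_smul]
  · rw [Matrix.det_nonsing_inv, Ring.inverse_eq_inv, norm_inv, hAd]; norm_num

/-- transfer of similitude under right multiplication by a symplectic matrix -/
lemma sim_mul_right {M P : Matrix Idx Idx ℚ_[p]} {ν : ℚ_[p]}
    (hM : Mᵀ * Jmat p * M = ν • Jmat p) (hP : Pᵀ * Jmat p * P = Jmat p) :
    (M * P)ᵀ * Jmat p * (M * P) = ν • Jmat p := by
  rw [Matrix.transpose_mul]
  calc Pᵀ * Mᵀ * Jmat p * (M * P) = Pᵀ * (Mᵀ * Jmat p * M) * P := by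
        simp only [Matrix.mul_assoc]
    _ = Pᵀ * (ν • Jmat p) * P := by rw [hM]
    _ = ν • (Pᵀ * Jmat p * P) := by rw [Matrix.mul_smul, Matrix.smul_mul]
    _ = ν • Jmat p := by rw [hP]

lemma sim_mul_left {M P : Matrix Idx Idx ℚ_[p]} {ν : ℚ_[p]}
    (hM : Mᵀ * Jmat p * M = ν • Jmat p) (hP : Pᵀ * Jmat p * P = Jmat p) :
    (P * M)ᵀ * Jmat p * (P * M) = ν • Jmat p := by
  rw [Matrix.transpose_mul]
  calc Mᵀ * Pᵀ * Jmat p * (P * M) = Mᵀ * (Pᵀ * Jmat p * P) * M := by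
        simp only [Matrix.mul_assoc]
    _ = Mᵀ * Jmat p * M := by rw [hP]
    _ = ν • Jmat p := hM

/-- the inverse of a symplectic matrix is symplectic -/
lemma symp_inv {P : Matrix Idx Idx ℚ_[p]} (hP : Pᵀ * Jmat p * P = Jmat p) :
    (P⁻¹)ᵀ * Jmat p * P⁻¹ = Jmat p := by
  have hd : IsUnit P.det := by
    have h2 : P.det ^ 2 = (1 : ℚ_[p]) ^ 4 :=
      det_sq_of_sim (A := P) (ν := 1) (by rw [one_smul]; exact hP)
    rw [one_pow] at h2
    refine isUnit_iff_ne_zero.mpr (fun h0 => ?_)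
    rw [h0] at h2; simp at h2
  have hmul : P * P⁻¹ = 1 := Matrix.mul_nonsing_inv P hd
  have htr : (P⁻¹)ᵀ * Pᵀ = 1 := by rw [← Matrix.transpose_mul, hmul, Matrix.transpose_one]
  calc (P⁻¹)ᵀ * Jmat p * P⁻¹ = (P⁻¹)ᵀ * (Pᵀ * Jmat p * P) * P⁻¹ := by rw [hP]
    _ = ((P⁻¹)ᵀ * Pᵀ) * Jmat p * (P * P⁻¹) := by simp only [Matrix.mul_assoc]
    _ = Jmat p := by rw [htr, hmul]; simp

/-- "row form" of the similitude relation -/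
lemma sim_rowform {A : Matrix Idx Idx ℚ_[p]} {ν : ℚ_[p]} (hν0 : ν ≠ 0)
    (h : Aᵀ * Jmat p * A = ν • Jmat p) : A * Jmat p * Aᵀ = ν • Jmat p := by
  have hdet : IsUnit A.det := by
    refine isUnit_iff_ne_zero.mpr (fun h0 => ?_)
    have hsq := det_sq_of_sim h
    rw [h0] at hsq
    exact hν0 (by simpa using (pow_eq_zero_iff (by norm_num : (4:ℕ) ≠ 0)).mp hsq.symm)
  have hmul : A * A⁻¹ = 1 := Matrix.mul_nonsing_inv A hdet
  have h1 : Aᵀ * Jmat p = ν • (Jmat p * A⁻¹) := by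
    have h1' := congrArg (fun X => X * A⁻¹) h
    simp only [smul_mul_assoc, mul_assoc, hmul, mul_one] at h1'
    exact h1'
  have h2 : Aᵀ = (-ν) • (Jmat p * (A⁻¹ * Jmat p)) := by
    have h1'' := congrArg (fun X => X * Jmat p) h1
    simp only [smul_mul_assoc, mul_assoc, J_mul_J, mul_neg, mul_one,
      mul_smul_comm] at h1''
    rw [neg_smul]
    rw [← h1'', neg_neg]
  calc A * Jmat p * Aᵀ = A * Jmat p * ((-ν) • (Jmat p * (A⁻¹ * Jmat p))) := by rw [← h2]
    _ = (-ν) • (A * (Jmat p * Jmat p) * (A⁻¹ * Jmat p)) := by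
        rw [mul_smul_comm]
        congr 1
        simp only [mul_assoc]
    _ = ν • (A * A⁻¹ * Jmat p) := by
        rw [J_mul_J]
        simp only [mul_neg, mul_one, mul_neg_one, neg_mul, neg_smul, smul_neg, neg_neg,
          mul_assoc]
    _ = ν • Jmat p := by rw [hmul, one_mul]

/-! ### reduction mod `p` -/

noncomputable def red (M : Matrix Idx Idx ℚ_[p]) (h : IsInt M) : Matrix Idx Idx (ZMod p) :=
  (ilift M h).map (PadicInt.toZMod : ℤ_[p] →+* ZMod p)

lemma red_apply (M : Matrix Idx Idx ℚ_[p]) (h : IsInt M) (i j : Idx) :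
    red M h i j = PadicInt.toZMod (⟨M i j, h i j⟩ : ℤ_[p]) := rfl

lemma mk_eq {x : ℚ_[p]} (hx : ‖x‖ ≤ 1) (z : ℤ_[p]) (hz : x = (z : ℚ_[p])) :
    (⟨x, hx⟩ : ℤ_[p]) = z := Subtype.ext hz

lemma red_eq_one (M : Matrix Idx Idx ℚ_[p]) (h : IsInt M) (i j : Idx) (hij : M i j = 1) :
    red M h i j = 1 := by
  rw [red_apply, mk_eq (h i j) 1 (hij.trans PadicInt.coe_one.symm)]
  exact _root_.map_one _

lemma red_eq_zero (M : Matrix Idx Idx ℚ_[p]) (h : IsInt M) (i j : Idx) (hij : M i j = 0) :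
    red M h i j = 0 := by
  rw [red_apply, mk_eq (h i j) 0 (hij.trans PadicInt.coe_zero.symm), map_zero]

lemma red_mul {A B : Matrix Idx Idx ℚ_[p]} (hA : IsInt A) (hB : IsInt B) :
    red (A * B) (hA.mul hB) = red A hA * red B hB := by
  rw [red, ilift_mul hA hB, Matrix.map_mul (f := (PadicInt.toZMod : ℤ_[p] →+* ZMod p))]
  rfl

lemma toZMod_zero_iff (x : ℤ_[p]) : PadicInt.toZMod x = 0 ↔ ‖x‖ < 1 := by
  rw [← RingHom.mem_ker, PadicInt.ker_toZMod, PadicInt.maximalIdeal_eq_span_p,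
    Ideal.mem_span_singleton, ← PadicInt.norm_lt_one_iff_dvd]

lemma ilift_det_norm {A : Matrix Idx Idx ℚ_[p]} (hA : IsInt A) :
    ‖(ilift A hA).det‖ = ‖A.det‖ := by
  have : (cR p) (ilift A hA).det = A.det := by
    rw [RingHom.map_det, RingHom.mapMatrix_apply, ilift_map]
  rw [← this, cR_apply, ← PadicInt.norm_def]

lemma red_det_isUnit {A : Matrix Idx Idx ℚ_[p]} (hA : IsInt A) (hd : ‖A.det‖ = 1) :
    IsUnit (red A hA).det := by
  rw [red, ← RingHom.mapMatrix_apply, ← RingHom.map_det]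
  refine isUnit_iff_ne_zero.mpr (fun h0 => ?_)
  rw [toZMod_zero_iff, ilift_det_norm hA, hd] at h0
  exact lt_irrefl 1 h0

lemma rank_red_mul_left {P M : Matrix Idx Idx ℚ_[p]} (hP : P ∈ GSpZ p) (hM : IsInt M) :
    (red (P * M) ((GSpZ_int hP).mul hM)).rank = (red M hM).rank := by
  rw [red_mul (GSpZ_int hP) hM]
  exact Matrix.rank_mul_eq_right_of_isUnit_det _ _ (red_det_isUnit (GSpZ_int hP) hP.2.2)

lemma rank_red_mul_right {M P : Matrix Idx Idx ℚ_[p]} (hM : IsInt M) (hP : P ∈ GSpZ p) :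
    (red (M * P) (hM.mul (GSpZ_int hP))).rank = (red M hM).rank := by
  rw [red_mul hM (GSpZ_int hP)]
  exact Matrix.rank_mul_eq_left_of_isUnit_det _ _ (red_det_isUnit (GSpZ_int hP) hP.2.2)

lemma exists_div_p {x : ℚ_[p]} (hx : ‖x‖ ≤ 1)
    (h0 : PadicInt.toZMod (⟨x, hx⟩ : ℤ_[p]) = 0) :
    ∃ y : ℚ_[p], ‖y‖ ≤ 1 ∧ x = p * y := by
  replace h0 := (toZMod_zero_iff _).mp h0
  replace h0 := (PadicInt.norm_lt_one_iff_dvd _).mp h0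
  obtain ⟨z, hz⟩ := h0
  refine ⟨z, PadicInt.norm_le_one z, ?_⟩
  have := congrArg (fun t : ℤ_[p] => (t : ℚ_[p])) hz
  simpa [PadicInt.coe_mul] using this

lemma norm_one_of_red_ne {x : ℚ_[p]} (hx : ‖x‖ ≤ 1)
    (h0 : PadicInt.toZMod (⟨x, hx⟩ : ℤ_[p]) ≠ 0) : ‖x‖ = 1 := by
  by_contra h
  exact h0 ((toZMod_zero_iff _).mpr (lt_of_le_of_ne hx h))

lemma two_le_rank {K : Type*} [Field K] {n : Type*} [Fintype n] [DecidableEq n]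
    (R : Matrix n n K) (i₀ j₀ i₁ j₁ : n)
    (h00 : R i₀ j₀ ≠ 0) (h01 : R i₀ j₁ = 0) (h11 : R i₁ j₁ ≠ 0) : 2 ≤ R.rank := by
  classical
  set v : n → K := fun i => R i j₀ with hv
  set w : n → K := fun i => R i j₁ with hw
  have hvr : v ∈ LinearMap.range R.mulVecLin := by
    refine ⟨Pi.single j₀ 1, ?_⟩
    rw [Matrix.mulVecLin_apply, Matrix.mulVec_single]
    funext i; simp [hv]
  have hwr : w ∈ LinearMap.range R.mulVecLin := by
    refine ⟨Pi.single j₁ 1, ?_⟩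
    rw [Matrix.mulVecLin_apply, Matrix.mulVec_single]
    funext i; simp [hw]
  have li : LinearIndependent K ![v, w] := by
    rw [LinearIndependent.pair_iff]
    intro s t hst
    have h0 := congrFun hst i₀
    simp only [Pi.add_apply, Pi.smul_apply, smul_eq_mul, Pi.zero_apply, hv, hw, h01,
      mul_zero, add_zero] at h0
    have hs : s = 0 := by
      rcases mul_eq_zero.mp h0 with h | h
      · exact h
      · exact absurd h h00
    have h1 := congrFun hst i₁
    rw [hs] at h1
    simp only [Pi.add_apply, Pi.smul_apply, smul_eq_mul, Pi.zero_apply, zero_mul,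
      zero_add] at h1
    have ht : t = 0 := by
      rcases mul_eq_zero.mp h1 with h | h
      · exact h
      · exact absurd h h11
    exact ⟨hs, ht⟩
  have hspan : Submodule.span K (Set.range ![v, w]) ≤ LinearMap.range R.mulVecLin := by
    rw [Submodule.span_le]
    rintro x ⟨k, rfl⟩
    fin_cases k
    · exact hvr
    · exact hwr
  have hfr : Module.finrank K (Submodule.span K (Set.range ![v, w])) = 2 := by
    rw [finrank_span_eq_card li]
    simp
  rw [Matrix.rank, ← hfr]
  exact Submodule.finrank_mono hspan

/-! ### explicit symplectic matrices -/

noncomputable def sgm (p : ℕ) [Fact p.Prime] : Matrix Idx Idx ℚ_[p] :=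
  Matrix.fromBlocks !![0,1;1,0] 0 0 !![0,1;1,0]

lemma sgm_symp : (sgm p)ᵀ * Jmat p * sgm p = Jmat p := by
  ext i j
  rcases i with i | i <;> rcases j with j | j <;> fin_cases i <;> fin_cases j <;>
    simp [Matrix.mul_apply, Fintype.sum_sum_type, Fin.sum_univ_two, Jmat, sgm]

lemma J_symp : (Jmat p)ᵀ * Jmat p * Jmat p = Jmat p := by
  rw [J_transpose]
  calc -Jmat p * Jmat p * Jmat p = -(Jmat p * Jmat p) * Jmat p := by rw [neg_mul]
    _ = Jmat p := by rw [J_mul_J]; simp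

lemma sgm_int : IsInt (sgm p) := by
  intro i j
  rcases i with i | i <;> rcases j with j | j <;> fin_cases i <;> fin_cases j <;>
    simp [sgm]

lemma J_int : IsInt (Jmat p) := by
  intro i j
  rcases i with i | i <;> rcases j with j | j <;> fin_cases i <;> fin_cases j <;>
    simp [Jmat]

lemma sgm_mem : sgm p ∈ GSpZ p :=
  mem_GSpZ_of sgm_int one_ne_zero (by rw [one_smul]; exact sgm_symp) (by norm_num)

lemma J_mem : Jmat p ∈ GSpZ p :=
  mem_GSpZ_of J_int one_ne_zero (by rw [one_smul]; exact J_symp) (by norm_num)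

lemma symp_mul {P Q : Matrix Idx Idx ℚ_[p]} (hP : Pᵀ * Jmat p * P = Jmat p)
    (hQ : Qᵀ * Jmat p * Q = Jmat p) : (P * Q)ᵀ * Jmat p * (P * Q) = Jmat p := by
  have := sim_mul_right (M := P) (P := Q) (ν := 1) (by rw [one_smul]; exact hP) hQ
  simpa using this

lemma row_select (i₀ : Idx) :
    ∃ P : Matrix Idx Idx ℚ_[p], P ∈ GSpZ p ∧ Pᵀ * Jmat p * P = Jmat p ∧
      ∀ (A : Matrix Idx Idx ℚ_[p]) (j : Idx), (P * A) (Sum.inl 0) j = A i₀ j := by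
  rcases i₀ with i | i <;> fin_cases i
  · refine ⟨1, ?_, ?_, fun A j => by simp⟩
    · exact mem_GSpZ_of (by intro i j; rcases i with i|i <;> rcases j with j|j <;>
        fin_cases i <;> fin_cases j <;> simp [Matrix.one_apply])
        one_ne_zero (by simp) (by norm_num)
    · simp
  · refine ⟨sgm p, sgm_mem, sgm_symp, fun A j => ?_⟩
    simp [Matrix.mul_apply, Fintype.sum_sum_type, Fin.sum_univ_two, sgm]
  · refine ⟨Jmat p, J_mem, J_symp, fun A j => ?_⟩
    simp [Matrix.mul_apply, Fintype.sum_sum_type, Fin.sum_univ_two, Jmat]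
  · refine ⟨sgm p * Jmat p, GSpZ_mul sgm_mem J_mem, symp_mul sgm_symp J_symp, fun A j => ?_⟩
    simp [Matrix.mul_apply, Fintype.sum_sum_type, Fin.sum_univ_two, sgm, Jmat]

lemma col_select (j₀ : Idx) :
    ∃ Q : Matrix Idx Idx ℚ_[p], Q ∈ GSpZ p ∧ Qᵀ * Jmat p * Q = Jmat p ∧
      ∃ ε : ℚ_[p], ‖ε‖ = 1 ∧
      ∀ (A : Matrix Idx Idx ℚ_[p]) (i : Idx), (A * Q) i (Sum.inl 0) = ε * A i j₀ := by
  rcases j₀ with j | j <;> fin_cases j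
  · refine ⟨1, ?_, by simp, 1, by norm_num, fun A i => by simp⟩
    exact mem_GSpZ_of (by intro i j; rcases i with i|i <;> rcases j with j|j <;>
      fin_cases i <;> fin_cases j <;> simp [Matrix.one_apply])
      one_ne_zero (by simp) (by norm_num)
  · refine ⟨sgm p, sgm_mem, sgm_symp, 1, by norm_num, fun A i => ?_⟩
    simp [Matrix.mul_apply, Fintype.sum_sum_type, Fin.sum_univ_two, sgm]
  · refine ⟨Jmat p, J_mem, J_symp, -1, by norm_num, fun A i => ?_⟩
    simp [Matrix.mul_apply, Fintype.sum_sum_type, Fin.sum_univ_two, Jmat]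
  · refine ⟨Jmat p * sgm p, GSpZ_mul J_mem sgm_mem, symp_mul J_symp sgm_symp, -1, by norm_num,
      fun A i => ?_⟩
    simp [Matrix.mul_apply, Fintype.sum_sum_type, Fin.sum_univ_two, sgm, Jmat]

/-! ### the matrices `S` and `U` -/

noncomputable def mkS (p : ℕ) [Fact p.Prime] (a b c d : ℚ_[p]) : Matrix Idx Idx ℚ_[p] :=
  Matrix.fromBlocks !![a, 0; b, 1] 0 !![c, d * a⁻¹; d, 0] !![a⁻¹, -(b * a⁻¹); 0, 1]

lemma mkS_symp (a b c d : ℚ_[p]) (ha : a ≠ 0) :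
    (mkS p a b c d)ᵀ * Jmat p * mkS p a b c d = Jmat p := by
  ext i j
  rcases i with i | i <;> rcases j with j | j <;> fin_cases i <;> fin_cases j <;>
    simp [Matrix.mul_apply, Fintype.sum_sum_type, Fin.sum_univ_two, Jmat, mkS] <;>
    (try field_simp) <;> (try ring)

lemma mkS_int (a b c d : ℚ_[p]) (ha : ‖a‖ = 1) (hb : ‖b‖ ≤ 1) (hc : ‖c‖ ≤ 1)
    (hd : ‖d‖ ≤ 1) : IsInt (mkS p a b c d) := by
  intro i j
  rcases i with i | i <;> rcases j with j | j <;> fin_cases i <;> fin_cases j <;>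
    simp [mkS, norm_mul, ha] <;>
    first
      | exact hb
      | exact hc
      | exact hd
      | norm_num

lemma mkS_col (a b c d : ℚ_[p]) :
    ∀ i, mkS p a b c d i (Sum.inl 0) = Sum.elim ![a, b] ![c, d] i := by
  intro i
  rcases i with i | i <;> fin_cases i <;> simp [mkS]

noncomputable def mkU (p : ℕ) [Fact p.Prime] (r2 r3 r4 : ℚ_[p]) : Matrix Idx Idx ℚ_[p] :=
  Matrix.fromBlocks !![1, r2; 0, 1] !![r3, r4; r4, 0] 0 !![1, 0; -r2, 1]

lemma mkU_symp (r2 r3 r4 : ℚ_[p]) :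
    (mkU p r2 r3 r4)ᵀ * Jmat p * mkU p r2 r3 r4 = Jmat p := by
  ext i j
  rcases i with i | i <;> rcases j with j | j <;> fin_cases i <;> fin_cases j <;>
    simp [Matrix.mul_apply, Fintype.sum_sum_type, Fin.sum_univ_two, Jmat, mkU] <;>
    (try ring)

lemma mkU_int (r2 r3 r4 : ℚ_[p]) (h2 : ‖r2‖ ≤ 1) (h3 : ‖r3‖ ≤ 1) (h4 : ‖r4‖ ≤ 1) :
    IsInt (mkU p r2 r3 r4) := by
  intro i j
  rcases i with i | i <;> rcases j with j | j <;> fin_cases i <;> fin_cases j <;>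
    simp [mkU] <;>
    first
      | exact h2
      | exact h3
      | exact h4
      | norm_num

lemma mkU_row (r2 r3 r4 : ℚ_[p]) :
    ∀ k, mkU p r2 r3 r4 (Sum.inl 0) k = Sum.elim ![1, r2] ![r3, r4] k := by
  intro k
  rcases k with k | k <;> fin_cases k <;> simp [mkU]

lemma mkU_col (r2 r3 r4 : ℚ_[p]) :
    ∀ i, mkU p r2 r3 r4 i (Sum.inl 0) = (Pi.single (Sum.inl 0) (1 : ℚ_[p]) : Idx → ℚ_[p]) i := by
  intro i
  rcases i with i | i <;> fin_cases i <;> simp [mkU, Pi.single_apply]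

/-! ### the core normal form argument -/

lemma core (M : Matrix Idx Idx ℚ_[p]) (hint : IsInt M) (μ : ℚ_[p]) (hμ0 : μ ≠ 0)
    (hμ : Mᵀ * Jmat p * M = μ • Jmat p) (hval : μ.valuation = 2)
    (ha : ‖M (Sum.inl 0) (Sum.inl 0)‖ = 1)
    (hrank : (red M hint).rank = 1) :
    ∃ X ∈ GSpZ p, ∃ Y ∈ GSpZ p, M = X * Bmat p * Y := by
  have hppos : (1 : ℝ) < (p : ℝ) := by exact_mod_cast (Fact.out : p.Prime).one_lt
  have hpr0 : (p : ℝ) ≠ 0 := by linarith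
  have hpq : (p : ℚ_[p]) ≠ 0 := by
    exact_mod_cast Nat.cast_ne_zero.mpr (Fact.out : p.Prime).ne_zero
  have hμnorm : ‖μ‖ = (p : ℝ) ^ (-2 : ℤ) := by
    rw [Padic.norm_eq_zpow_neg_valuation hμ0, hval]
  have hpnorm : ‖(p : ℚ_[p])‖ = (p : ℝ)⁻¹ := Padic.norm_p
  set u : ℚ_[p] := μ / (p : ℚ_[p]) ^ 2 with hu_def
  have hzp : (p : ℝ) ^ (-2 : ℤ) = ((p : ℝ) ^ (2 : ℕ))⁻¹ := by
    rw [_root_.zpow_neg]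
    norm_num
  have hu1 : ‖u‖ = 1 := by
    rw [hu_def, norm_div, norm_pow, hpnorm, hμnorm, inv_pow, hzp]
    exact div_self (by positivity)
  have hu0 : u ≠ 0 := by
    intro h; rw [h, norm_zero] at hu1; exact zero_ne_one hu1
  have hμu : μ = (p : ℚ_[p]) ^ 2 * u := by
    rw [hu_def]; field_simp
  -- the first column of M
  set a : ℚ_[p] := M (Sum.inl 0) (Sum.inl 0) with ha_def
  set b : ℚ_[p] := M (Sum.inl 1) (Sum.inl 0) with hb_def
  set c : ℚ_[p] := M (Sum.inr 0) (Sum.inl 0) with hc_def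
  set d : ℚ_[p] := M (Sum.inr 1) (Sum.inl 0) with hd_def
  have ha0 : a ≠ 0 := by
    intro h; rw [h, norm_zero] at ha; exact zero_ne_one ha
  set S : Matrix Idx Idx ℚ_[p] := mkS p a b c d with hS_def
  have hSsymp : Sᵀ * Jmat p * S = Jmat p := mkS_symp a b c d ha0
  have hSint : IsInt S := mkS_int a b c d ha
    (by rw [hb_def]; exact hint _ _) (by rw [hc_def]; exact hint _ _)
    (by rw [hd_def]; exact hint _ _)
  have hSmem : S ∈ GSpZ p :=
    mem_GSpZ_of hSint one_ne_zero (by rw [one_smul]; exact hSsymp) (by norm_num)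
  have hSdet : IsUnit S.det := GSpZ_det_unit hSmem
  set M₁ : Matrix Idx Idx ℚ_[p] := S⁻¹ * M with hM₁_def
  have hSinvmem : S⁻¹ ∈ GSpZ p := GSpZ_inv hSmem
  have hM₁int : IsInt M₁ := (GSpZ_int hSinvmem).mul hint
  have hM₁sim : M₁ᵀ * Jmat p * M₁ = μ • Jmat p := sim_mul_left hμ (symp_inv hSsymp)
  have hSM₁ : S * M₁ = M := by
    rw [hM₁_def, ← mul_assoc, Matrix.mul_nonsing_inv S hSdet, one_mul]
  have hcol₁ : ∀ i, M₁ i (Sum.inl 0) = (Pi.single (Sum.inl 0) (1 : ℚ_[p]) : Idx → ℚ_[p]) i := by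
    have hS1 : S *ᵥ (Pi.single (Sum.inl 0) (1 : ℚ_[p])) = fun k => M k (Sum.inl 0) := by
      funext k
      simp only [Matrix.mulVec_single_one, Matrix.col_apply]
      rw [hS_def, mkS_col]
      rcases k with k | k <;> fin_cases k <;>
        simp [ha_def, hb_def, hc_def, hd_def]
    have key : (fun i => M₁ i (Sum.inl 0)) = S⁻¹ *ᵥ (fun k => M k (Sum.inl 0)) := by
      funext i
      rw [hM₁_def, Matrix.mul_apply]
      rfl
    intro i
    have hk := congrFun key i
    rw [hk, ← hS1, Matrix.mulVec_mulVec, Matrix.nonsing_inv_mul S hSdet, Matrix.one_mulVec]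
  have hr1 : M₁ (Sum.inl 0) (Sum.inl 0) = 1 := by
    rw [hcol₁]; simp
  set r2 : ℚ_[p] := M₁ (Sum.inl 0) (Sum.inl 1) with hr2_def
  set r3 : ℚ_[p] := M₁ (Sum.inl 0) (Sum.inr 0) with hr3_def
  set r4 : ℚ_[p] := M₁ (Sum.inl 0) (Sum.inr 1) with hr4_def
  set U : Matrix Idx Idx ℚ_[p] := mkU p r2 r3 r4 with hU_def
  have hUsymp : Uᵀ * Jmat p * U = Jmat p := mkU_symp r2 r3 r4
  have hUint : IsInt U := mkU_int r2 r3 r4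
    (by rw [hr2_def]; exact hM₁int _ _) (by rw [hr3_def]; exact hM₁int _ _)
    (by rw [hr4_def]; exact hM₁int _ _)
  have hUmem : U ∈ GSpZ p :=
    mem_GSpZ_of hUint one_ne_zero (by rw [one_smul]; exact hUsymp) (by norm_num)
  have hUdet : IsUnit U.det := GSpZ_det_unit hUmem
  set M₂ : Matrix Idx Idx ℚ_[p] := M₁ * U⁻¹ with hM₂_def
  have hUinvmem : U⁻¹ ∈ GSpZ p := GSpZ_inv hUmem
  have hM₂int : IsInt M₂ := hM₁int.mul (GSpZ_int hUinvmem)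
  have hM₂sim : M₂ᵀ * Jmat p * M₂ = μ • Jmat p := sim_mul_right hM₁sim (symp_inv hUsymp)
  have hM₂U : M₂ * U = M₁ := by
    rw [hM₂_def, mul_assoc, Matrix.nonsing_inv_mul U hUdet, mul_one]
  -- the first row of M₂ is e₁
  have hrow₂ : ∀ j, M₂ (Sum.inl 0) j = (Pi.single (Sum.inl 0) (1 : ℚ_[p]) : Idx → ℚ_[p]) j := by
    have hU1 : (Pi.single (Sum.inl 0) (1 : ℚ_[p])) ᵥ* U = fun k => M₁ (Sum.inl 0) k := by
      funext k
      simp only [Matrix.single_one_vecMul, Matrix.row_apply]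
      rw [hU_def, mkU_row]
      rcases k with k | k <;> fin_cases k <;>
        simp [hr1, hr2_def, hr3_def, hr4_def]
    have key : (fun j => M₂ (Sum.inl 0) j) = (fun k => M₁ (Sum.inl 0) k) ᵥ* U⁻¹ := by
      funext j
      rw [hM₂_def, Matrix.mul_apply]
      rfl
    intro j
    have hk := congrFun key j
    rw [hk, ← hU1, Matrix.vecMul_vecMul, Matrix.mul_nonsing_inv U hUdet, Matrix.vecMul_one]
  -- the first column of M₂ is e₁
  have hcol₂ : ∀ i, M₂ i (Sum.inl 0) = (Pi.single (Sum.inl 0) (1 : ℚ_[p]) : Idx → ℚ_[p]) i := by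
    have hUc : U *ᵥ (Pi.single (Sum.inl 0) (1 : ℚ_[p])) = Pi.single (Sum.inl 0) (1 : ℚ_[p]) := by
      funext i
      simp only [Matrix.mulVec_single_one, Matrix.col_apply]
      rw [hU_def, mkU_col]
    have hUc' : U⁻¹ *ᵥ (Pi.single (Sum.inl 0) (1 : ℚ_[p])) = Pi.single (Sum.inl 0) (1 : ℚ_[p]) := by
      conv_lhs => rw [← hUc]
      rw [Matrix.mulVec_mulVec, Matrix.nonsing_inv_mul U hUdet, Matrix.one_mulVec]
    have hM₁c : M₁ *ᵥ (Pi.single (Sum.inl 0) (1 : ℚ_[p])) = Pi.single (Sum.inl 0) (1 : ℚ_[p]) := by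
      funext i
      simp only [Matrix.mulVec_single_one, Matrix.col_apply]
      rw [hcol₁]
    have hfin : M₂ *ᵥ (Pi.single (Sum.inl 0) (1 : ℚ_[p])) = Pi.single (Sum.inl 0) (1 : ℚ_[p]) := by
      rw [hM₂_def, ← Matrix.mulVec_mulVec, hUc', hM₁c]
    intro i
    have h2 := congrFun hfin i
    simp only [Matrix.mulVec_single_one, Matrix.col_apply] at h2
    exact h2
  -- the f₁-row of M₂
  have hrowf : ∀ j, M₂ (Sum.inr 0) j = (if j = Sum.inr 0 then μ else 0) := by
    intro j
    have h := congrFun (congrFun hM₂sim (Sum.inl 0)) j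
    rcases j with j | j <;> fin_cases j <;>
      simp [Matrix.mul_apply, Fintype.sum_sum_type, Fin.sum_univ_two, Jmat,
        hcol₂, Pi.single_apply, Matrix.smul_apply, smul_eq_mul] at h ⊢ <;>
      (try exact h) <;> (try linear_combination h)
  -- the f₁-column of M₂
  have hν₂ : M₂ * Jmat p * M₂ᵀ = μ • Jmat p := sim_rowform hμ0 hM₂sim
  have hcolf : ∀ i, M₂ i (Sum.inr 0) = (if i = Sum.inr 0 then μ else 0) := by
    intro i
    have h := congrFun (congrFun hν₂ (Sum.inl 0)) i
    rcases i with i | i <;> fin_cases i <;>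
      simp [Matrix.mul_apply, Fintype.sum_sum_type, Fin.sum_univ_two, Jmat,
        hrow₂, Pi.single_apply, Matrix.smul_apply, smul_eq_mul] at h ⊢ <;>
      (try exact h) <;> (try linear_combination h)
  -- the determinant relation on the inner block
  have hdet2 : M₂ (Sum.inl 1) (Sum.inl 1) * M₂ (Sum.inr 1) (Sum.inr 1)
      - M₂ (Sum.inr 1) (Sum.inl 1) * M₂ (Sum.inl 1) (Sum.inr 1) = μ := by
    have h := congrFun (congrFun hM₂sim (Sum.inl 1)) (Sum.inr 1)
    simp [Matrix.mul_apply, Fintype.sum_sum_type, Fin.sum_univ_two, Jmat,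
      hrow₂, hrowf, hcol₂, hcolf, Pi.single_apply, Matrix.smul_apply, smul_eq_mul] at h
    linear_combination h
  -- rank of the reduction of M₂
  have hrank₂ : (red M₂ hM₂int).rank = 1 := by
    calc (red M₂ hM₂int).rank = (red M₁ hM₁int).rank := rank_red_mul_right hM₁int hUinvmem
      _ = (red M hint).rank := rank_red_mul_left hSinvmem hint
      _ = 1 := hrank
  have e1 : M₂ (Sum.inl 0) (Sum.inl 0) = 1 := by rw [hrow₂]; simp
  have h00red : red M₂ hM₂int (Sum.inl 0) (Sum.inl 0) ≠ 0 := by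
    rw [red_eq_one M₂ hM₂int _ _ e1]
    exact one_ne_zero
  have hred0 : ∀ j, M₂ (Sum.inl 0) j = 0 → red M₂ hM₂int (Sum.inl 0) j = 0 :=
    fun j hj => red_eq_zero M₂ hM₂int _ _ hj
  have hgreek : ∀ i j : Idx, M₂ (Sum.inl 0) j = 0 →
      ∃ y : ℚ_[p], ‖y‖ ≤ 1 ∧ M₂ i j = (p : ℚ_[p]) * y := by
    intro i j hj
    have hz : red M₂ hM₂int i j = 0 := by
      by_contra hne
      have h2 := two_le_rank (red M₂ hM₂int) (Sum.inl 0) (Sum.inl 0) i j h00red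
        (hred0 j hj) hne
      rw [hrank₂] at h2
      omega
    rw [red_apply] at hz
    exact exists_div_p (hM₂int i j) hz
  obtain ⟨α', hα'le, hα⟩ := hgreek (Sum.inl 1) (Sum.inl 1) (by rw [hrow₂]; simp)
  obtain ⟨β', hβ'le, hβ⟩ := hgreek (Sum.inl 1) (Sum.inr 1) (by rw [hrow₂]; simp)
  obtain ⟨γ', hγ'le, hγ⟩ := hgreek (Sum.inr 1) (Sum.inl 1) (by rw [hrow₂]; simp)
  obtain ⟨δ', hδ'le, hδ⟩ := hgreek (Sum.inr 1) (Sum.inr 1) (by rw [hrow₂]; simp)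
  have hudet : α' * δ' - γ' * β' = u := by
    have h1 : (p : ℚ_[p]) ^ 2 * (α' * δ' - γ' * β') = (p : ℚ_[p]) ^ 2 * u := by
      rw [hα, hβ, hγ, hδ, hμu] at hdet2
      linear_combination hdet2
    exact mul_left_cancel₀ (pow_ne_zero 2 hpq) h1
  set C : Matrix Idx Idx ℚ_[p] :=
    Matrix.fromBlocks !![1, 0; 0, α'] !![0, 0; 0, β'] !![0, 0; 0, γ'] !![u, 0; 0, δ']
    with hC_def
  have hCsim : Cᵀ * Jmat p * C = u • Jmat p := by
    ext i j
    rcases i with i | i <;> rcases j with j | j <;> fin_cases i <;> fin_cases j <;>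
      simp [Matrix.mul_apply, Fintype.sum_sum_type, Fin.sum_univ_two, Jmat, hC_def,
        Matrix.smul_apply, smul_eq_mul] <;>
      first
        | linear_combination hudet
        | linear_combination -hudet
        | ring
  have hCint : IsInt C := by
    intro i j
    rcases i with i | i <;> rcases j with j | j <;> fin_cases i <;> fin_cases j <;>
      simp [hC_def] <;>
      first
        | exact hα'le
        | exact hβ'le
        | exact hγ'le
        | exact hδ'le
        | exact le_of_eq hu1
        | norm_num
  have hCmem : C ∈ GSpZ p := mem_GSpZ_of hCint hu0 hCsim hu1
  have hBC : Bmat p * C = M₂ := by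
    ext i j
    rcases i with i | i <;> rcases j with j | j <;> fin_cases i <;> fin_cases j <;>
      simp [Matrix.mul_apply, Fintype.sum_sum_type, Fin.sum_univ_two, Bmat, hC_def,
        Matrix.diagonal, hrow₂, hrowf, hcol₂, hcolf, Pi.single_apply, hα, hβ, hγ, hδ,
        hμu] <;>
      ring
  refine ⟨S, hSmem, C * U, GSpZ_mul hCmem hUmem, ?_⟩
  rw [← hSM₁, ← hM₂U, ← hBC]
  simp only [mul_assoc]

/-! ### forward direction -/

lemma Bmat_int : IsInt (Bmat p) := by
  have hp1 : (1 : ℝ) ≤ (p : ℝ) := by exact_mod_cast (Fact.out : p.Prime).one_lt.le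
  have hp2 : (1 : ℝ) ≤ (p : ℝ) ^ 2 := one_le_pow₀ hp1
  intro i j
  rcases i with i | i <;> rcases j with j | j <;> fin_cases i <;> fin_cases j <;>
    simp [Bmat, Matrix.diagonal] <;>
    first
      | exact inv_le_one_of_one_le₀ hp1
      | exact inv_le_one_of_one_le₀ hp2
      | norm_num

lemma red_zero_of_norm_lt (M : Matrix Idx Idx ℚ_[p]) (h : IsInt M) (i j : Idx)
    (hij : ‖M i j‖ < 1) : red M h i j = 0 := by
  rw [red_apply]
  exact (toZMod_zero_iff _).mpr hij

lemma ilift_Bmat : ilift (Bmat p) Bmat_int =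
    Matrix.diagonal (Sum.elim ![1, (p : ℤ_[p])] ![(p : ℤ_[p]) ^ 2, (p : ℤ_[p])]) := by
  apply map_inj
  simp only [ilift_map]
  rw [Matrix.diagonal_map (by simp [cR_apply])]
  have hfun : (fun m => (cR p) (Sum.elim ![1, (p : ℤ_[p])] ![(p : ℤ_[p]) ^ 2, (p : ℤ_[p])] m))
      = Sum.elim ![1, (p : ℚ_[p])] ![(p : ℚ_[p]) ^ 2, (p : ℚ_[p])] := by
    funext m
    rcases m with m | m <;> fin_cases m <;>
      simp [cR_apply, PadicInt.coe_natCast]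
  rw [hfun, Bmat]

lemma red_Bmat : red (Bmat p) Bmat_int =
    Matrix.diagonal (Sum.elim ![(1 : ZMod p), 0] ![0, 0]) := by
  rw [red, ilift_Bmat, Matrix.diagonal_map (map_zero _)]
  have hfun : (fun m => (PadicInt.toZMod : ℤ_[p] →+* ZMod p)
        (Sum.elim ![1, (p : ℤ_[p])] ![(p : ℤ_[p]) ^ 2, (p : ℤ_[p])] m))
      = Sum.elim ![(1 : ZMod p), 0] ![0, 0] := by
    funext m
    rcases m with m | m <;> fin_cases m <;>
      simp [_root_.map_one, map_pow, map_natCast, ZMod.natCast_self]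
  rw [hfun]

lemma rank_red_Bmat : (red (Bmat p) Bmat_int).rank = 1 := by
  rw [red_Bmat, Matrix.rank_diagonal]
  refine Fintype.card_eq_one_iff.mpr ⟨⟨Sum.inl 0, by simp⟩, ?_⟩
  rintro ⟨i, hi⟩
  apply Subtype.ext
  rcases i with i | i <;> fin_cases i <;> simp at hi ⊢

lemma forward {M X Y : Matrix Idx Idx ℚ_[p]} (hX : X ∈ GSpZ p) (hY : Y ∈ GSpZ p)
    (hM : M = X * Bmat p * Y) :
    ∃ M' : Matrix Idx Idx ℤ_[p],
      (∀ i j, ((M' i j : ℚ_[p]) = M i j)) ∧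
      (M'.map (PadicInt.toZMod : ℤ_[p] →+* ZMod p)).rank = 1 := by
  subst hM
  have hint : IsInt (X * Bmat p * Y) := ((GSpZ_int hX).mul Bmat_int).mul (GSpZ_int hY)
  refine ⟨ilift _ hint, fun i j => rfl, ?_⟩
  have : (ilift _ hint).map (PadicInt.toZMod : ℤ_[p] →+* ZMod p) = red (X * Bmat p * Y) hint :=
    rfl
  rw [this]
  calc (red (X * Bmat p * Y) hint).rank
      = (red (X * Bmat p) ((GSpZ_int hX).mul Bmat_int)).rank :=
        rank_red_mul_right ((GSpZ_int hX).mul Bmat_int) hY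
    _ = (red (Bmat p) Bmat_int).rank := rank_red_mul_left hX Bmat_int
    _ = 1 := rank_red_Bmat
end DC

theorem mem_dcoset_B_iff_rank_one (p : ℕ) [Fact p.Prime]
    (M : Matrix Idx Idx ℚ_[p])
    (hint : ∀ i j, ‖M i j‖ ≤ 1)
    (μ : ℚ_[p]) (hμ0 : μ ≠ 0)
    (hμ : Mᵀ * Jmat p * M = μ • Jmat p)
    (hval : μ.valuation = 2) :
    (∃ X ∈ GSpZ p, ∃ Y ∈ GSpZ p, M = X * Bmat p * Y) ↔
      ∃ M' : Matrix Idx Idx ℤ_[p],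
        (∀ i j, ((M' i j : ℚ_[p]) = M i j)) ∧
        (M'.map (PadicInt.toZMod : ℤ_[p] →+* ZMod p)).rank = 1 := by
  constructor
  · rintro ⟨X, hX, Y, hY, hM⟩
    exact DC.forward hX hY hM
  · rintro ⟨M', hcoe, hrk⟩
    have hint' : DC.IsInt M := hint
    have hM' : M' = DC.ilift M hint' := by
      ext i j
      exact Subtype.coe_injective (show ((M' i j : ℚ_[p])) = _ by rw [hcoe i j]; rfl)
    have hrank : (DC.red M hint').rank = 1 := by
      have hh : DC.red M hint' = M'.map (PadicInt.toZMod : ℤ_[p] →+* ZMod p) := by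
        rw [hM']; rfl
      rw [hh]; exact hrk
    have hex : ∃ i j, DC.red M hint' i j ≠ 0 := by
      by_contra hall
      push_neg at hall
      have hzero : DC.red M hint' = 0 := by
        ext i j; exact hall i j
      rw [hzero, Matrix.rank_zero] at hrank
      exact absurd hrank (by norm_num)
    obtain ⟨i0, j0, hne⟩ := hex
    have hn1 : ‖M i0 j0‖ = 1 := DC.norm_one_of_red_ne (hint' i0 j0)
      (by rw [DC.red_apply] at hne; exact hne)
    obtain ⟨P, hPmem, hPsymp, hProw⟩ := DC.row_select (p := p) i0
    obtain ⟨Q, hQmem, hQsymp, ε, hε, hQcol⟩ := DC.col_select (p := p) j0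
    have hPdet := DC.GSpZ_det_unit hPmem
    have hQdet := DC.GSpZ_det_unit hQmem
    set N : Matrix Idx Idx ℚ_[p] := P * (M * Q) with hN_def
    have hNint : DC.IsInt N := (DC.GSpZ_int hPmem).mul (hint'.mul (DC.GSpZ_int hQmem))
    have hNsim : Nᵀ * Jmat p * N = μ • Jmat p :=
      DC.sim_mul_left (DC.sim_mul_right hμ hQsymp) hPsymp
    have hNcorner : ‖N (Sum.inl 0) (Sum.inl 0)‖ = 1 := by
      rw [hN_def, hProw (M * Q) (Sum.inl 0), hQcol M i0, norm_mul, hε, one_mul]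
      exact hn1
    have hNrank : (DC.red N hNint).rank = 1 := by
      calc (DC.red N hNint).rank
          = (DC.red (M * Q) (hint'.mul (DC.GSpZ_int hQmem))).rank :=
            DC.rank_red_mul_left hPmem (hint'.mul (DC.GSpZ_int hQmem))
        _ = (DC.red M hint').rank := DC.rank_red_mul_right hint' hQmem
        _ = 1 := hrank
    obtain ⟨X, hX, Y, hY, hNXY⟩ := DC.core N hNint μ hμ0 hNsim hval hNcorner hNrank
    have hMN : M = P⁻¹ * N * Q⁻¹ := by
      rw [hN_def, ← mul_assoc]
      rw [← mul_assoc, Matrix.nonsing_inv_mul P hPdet, Matrix.one_mul]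
      rw [mul_assoc, Matrix.mul_nonsing_inv Q hQdet, Matrix.mul_one]
    refine ⟨P⁻¹ * X, DC.GSpZ_mul (DC.GSpZ_inv hPmem) hX,
      Y * Q⁻¹, DC.GSpZ_mul hY (DC.GSpZ_inv hQmem), ?_⟩
    rw [hMN, hNXY]
    simp only [mul_assoc]
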